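/- Let (S, Σ) be a measurable space and κ a Markov kernel from S to S. If there exists at least one irreducibility measure for κ, then the set of irreducibility measures for κ, preordered by absolute continuity (φ ≼ φ' iff φ ≪ φ'), has a maximal element: there exists an irreducibility measure ψ for κ such that every irreducibility measure μ for κ with ψ ≪ μ satisfies μ ≪ ψ. -/

import Mathlib

open MeasureTheory ProbabilityTheory

/-- The n-fold composition of a kernel with itself (n-step transition kernel);
`kpow κ 0` is the identity kernel and `kpow κ (n+1) = κ ∘ₖ kpow κ n`. -/
noncomputable def kpow {S : Type*} [MeasurableSpace S] (κ : Kernel S S) : ℕ → Kernel S S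
  | 0 => Kernel.id
  | n + 1 => κ ∘ₖ kpow κ n

/-- A measure `φ` is an irreducibility measure for the kernel `κ` if for every
measurable set `A` with `φ A > 0` and every `x`, there is `n ≥ 1` with `κⁿ(x, A) > 0`. -/
def IsIrreducibilityMeasure {S : Type*} [MeasurableSpace S] (κ : Kernel S S)
    (φ : Measure S) : Prop :=
  ∀ A : Set S, MeasurableSet A → 0 < φ A → ∀ x : S, ∃ n : ℕ, 1 ≤ n ∧ 0 < kpow κ n x A

lemma kpow_add {S : Type*} [MeasurableSpace S] (κ : Kernel S S) [IsSFiniteKernel κ]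
    (m n : ℕ) : kpow κ (m + n) = kpow κ m ∘ₖ kpow κ n := by
  induction m with
  | zero => simp [kpow, Kernel.id_comp]
  | succ m ih =>
    have hsf : IsSFiniteKernel (kpow κ m) := by
      clear ih
      induction m with
      | zero => simp only [kpow]; infer_instance
      | succ k ihk => simp only [kpow]; exact Kernel.IsSFiniteKernel.comp κ (kpow κ k)
    rw [Nat.succ_add]
    show κ ∘ₖ kpow κ (m + n) = (κ ∘ₖ kpow κ m) ∘ₖ kpow κ n
    rw [ih, ← Kernel.comp_assoc]

theorem exists_maximal_element_irreducibility_measures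
    {S : Type*} [MeasurableSpace S] (κ : Kernel S S) [IsMarkovKernel κ]
    (φ : Measure S) (hφ : IsIrreducibilityMeasure κ φ) :
    ∃ ψ : Measure S, IsIrreducibilityMeasure κ ψ ∧
      ∀ μ : Measure S, IsIrreducibilityMeasure κ μ → ψ ≪ μ → μ ≪ ψ := by
  classical
  by_cases hex : ∃ φ₀ : Measure S, φ₀ ≠ 0 ∧ IsIrreducibilityMeasure κ φ₀
  · obtain ⟨φ₀, hφ₀ne, hφ₀⟩ := hex
    -- ψ A = ∑' n, ∫⁻ x, κ^{n+1}(x, A) dφ₀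
    set ψ : Measure S := Measure.sum (fun n : ℕ => φ₀.bind (fun x => kpow κ (n + 1) x)) with hψdef
    have hmeas : ∀ n : ℕ, Measurable (fun x => kpow κ n x) := fun n => (kpow κ n).measurable
    have hψ_apply : ∀ A : Set S, MeasurableSet A →
        ψ A = ∑' n : ℕ, ∫⁻ x, kpow κ (n + 1) x A ∂φ₀ := by
      intro A hA
      rw [hψdef, Measure.sum_apply _ hA]
      exact tsum_congr fun n => Measure.bind_apply hA (hmeas (n + 1)).aemeasurable
    refine ⟨ψ, ?_, ?_⟩
    · -- ψ is an irreducibility measure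
      intro A hA hApos x
      rw [hψ_apply A hA] at hApos
      obtain ⟨n, hn⟩ : ∃ n : ℕ, 0 < ∫⁻ x, kpow κ (n + 1) x A ∂φ₀ := by
        by_contra h
        push_neg at h
        simp only [le_zero_iff] at h
        rw [ENNReal.tsum_eq_zero.2 h] at hApos
        exact lt_irrefl 0 hApos
      have hfmeas : Measurable (fun y => kpow κ (n + 1) y A) :=
        Kernel.measurable_coe _ hA
      rw [lintegral_pos_iff_support hfmeas] at hn
      -- B := support = {y | κ^{n+1}(y,A) > 0}
      set B : Set S := Function.support (fun y => kpow κ (n + 1) y A) with hB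
      have hBmeas : MeasurableSet B := measurableSet_support hfmeas
      obtain ⟨m, hm1, hmpos⟩ := hφ₀ B hBmeas hn x
      refine ⟨n + 1 + m, by omega, ?_⟩
      rw [kpow_add κ (n + 1) m, Kernel.comp_apply' _ _ _ hA,
        lintegral_pos_iff_support hfmeas]
      exact hmpos
    · -- maximality: every irreducibility measure is ≪ ψ
      intro μ hμ _
      refine Measure.AbsolutelyContinuous.mk fun A hA hψA => ?_
      by_contra hμA
      have hμApos : 0 < μ A := pos_iff_ne_zero.mpr hμA
      rw [hψ_apply A hA] at hψA
      have hall : ∀ n : ℕ, ∫⁻ x, kpow κ (n + 1) x A ∂φ₀ = 0 := by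
        intro n
        exact (ENNReal.tsum_eq_zero.1 hψA) n
      have hae : ∀ᵐ y ∂φ₀, ∀ n : ℕ, kpow κ (n + 1) y A = 0 := by
        rw [ae_all_iff]
        intro n
        have := (lintegral_eq_zero_iff (Kernel.measurable_coe _ hA)).1 (hall n)
        filter_upwards [this] with y hy using hy
      have hne : (φ₀ : Measure S) Set.univ ≠ 0 := by
        simpa [Measure.measure_univ_eq_zero] using hφ₀ne
      haveI : (MeasureTheory.ae φ₀).NeBot := ae_neBot.mpr hφ₀ne
      obtain ⟨y, hy⟩ := hae.exists
      obtain ⟨n, hn1, hnpos⟩ := hμ A hA hμApos y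
      obtain ⟨k, rfl⟩ : ∃ k, n = k + 1 := ⟨n - 1, by omega⟩
      rw [hy k] at hnpos
      exact lt_irrefl 0 hnpos
  · -- no nonzero irreducibility measure: ψ = 0 works
    push_neg at hex
    refine ⟨0, ?_, ?_⟩
    · intro A hA hApos x
      simp at hApos
    · intro μ hμ _
      have : μ = 0 := by
        by_contra h
        exact hex μ h hμ
      simp [this]
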